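/- In the commutative differential ring (ℂ[t], d/dt) with vertex operator Y(f,x)g = f(t+x)·g(t), the element t⊗1⊗(x₁−x₂)⁻¹ − 1⊗t⊗(x₁−x₂)⁻¹ − 1⊗1⊗1 lies in the kernel of the map Z₂; concretely, (x₁−x₂)⁻¹(t+x₁)·1 − (x₁−x₂)⁻¹(t+x₂)·1 − 1 = 0 in ℂ[t]((x₁))((x₂)). Hence the vertex algebra (ℂ[t], d/dt) is degenerate. -/

import Mathlib

noncomputable section

/-- The iterated Laurent series ring `ℂ[t]((x₁))((x₂))`. -/
abbrev LL : Type := LaurentSeries (LaurentSeries (Polynomial ℂ))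

/-- The inner variable `x₁` of `ℂ[t]((x₁))((x₂))`. -/
def x₁ : LL := HahnSeries.C (HahnSeries.single (1 : ℤ) (1 : Polynomial ℂ))

/-- The outer variable `x₂` of `ℂ[t]((x₁))((x₂))`. -/
def x₂ : LL := HahnSeries.single (1 : ℤ) (1 : LaurentSeries (Polynomial ℂ))

/-- The variable `t` of `ℂ[t]` viewed in `ℂ[t]((x₁))((x₂))`. -/
def tt : LL := HahnSeries.C (HahnSeries.C (Polynomial.X : Polynomial ℂ))

/-- In the vertex algebra `(ℂ[t], d/dt)`, with `Y(f,x)g = f(t+x)g`, the element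
`t ⊗ 1 ⊗ (x₁-x₂)⁻¹ - 1 ⊗ t ⊗ (x₁-x₂)⁻¹ - 1 ⊗ 1 ⊗ 1` lies in the kernel of `Z₂`:
concretely, `(x₁-x₂)` is invertible in `ℂ[t]((x₁))((x₂))` and for any inverse `g` we have
`g·(t+x₁) - g·(t+x₂) - 1 = 0` in `ℂ[t]((x₁))((x₂))`.  Hence `Z₂` is not injective and
the vertex algebra `(ℂ[t], d/dt)` is degenerate. -/
theorem stmt1 :
    (∃ g : LL, g * (x₁ - x₂) = 1) ∧
    ∀ g : LL, g * (x₁ - x₂) = 1 →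
      g * (tt + x₁) - g * (tt + x₂) - 1 = 0 := by
  constructor
  · -- `x₁` is a unit with inverse `u`, and `x₁ - x₂ = x₁ * (1 - u * x₂)` with
    -- `u * x₂` of positive order, so `1 - u * x₂` is invertible via geometric series.
    set u : LL := HahnSeries.C (HahnSeries.single (-1 : ℤ) (1 : Polynomial ℂ)) with hu
    have hux : u * x₁ = 1 := by
      rw [hu, x₁, ← map_mul, HahnSeries.single_mul_single]
      norm_num
    have hy : u * x₂ = HahnSeries.single (1 : ℤ)
        (HahnSeries.single (-1 : ℤ) (1 : Polynomial ℂ)) := by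
      rw [hu, x₂, HahnSeries.C_apply, HahnSeries.single_mul_single]
      norm_num
    have hyo : 0 < (u * x₂).orderTop := by
      rw [hy, HahnSeries.orderTop_single (by
        simp [HahnSeries.single_eq_zero_iff, one_ne_zero])]
      norm_num
    have hgeo := HahnSeries.SummableFamily.one_sub_self_mul_hsum_powers hyo
    refine ⟨(HahnSeries.SummableFamily.powers (u * x₂)).hsum * u, ?_⟩
    have hfac : (1 - u * x₂) * x₁ = x₁ - x₂ := by
      have h3 : u * x₂ * x₁ = x₂ := by
        calc u * x₂ * x₁ = (u * x₁) * x₂ := by ring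
        _ = x₂ := by rw [hux]; exact one_mul x₂
      rw [sub_mul (1 : LL), h3, one_mul x₁]
    rw [← hfac]
    calc (HahnSeries.SummableFamily.powers (u * x₂)).hsum * u *
        ((1 - u * x₂) * x₁)
        = ((1 - u * x₂) * (HahnSeries.SummableFamily.powers (u * x₂)).hsum) *
          (u * x₁) := by ring
      _ = 1 := by rw [hgeo, hux]; exact one_mul (1 : LL)
  · intro g hg
    have h2 : g * (tt + x₁) - g * (tt + x₂) = g * (x₁ - x₂) := by ring
    rw [h2, hg]
    exact sub_self (1 : LL)
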